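/- Let n ≥ 3 be an integer, C > 0, C₂ ≠ 0 and C₃ real constants, and let I = {ξ ∈ ℝ : C₂(C₂ξ + C₃) < 0}. Define on I the functions φ(ξ) = ((n−2)²(C₂ξ + C₃)²/4)^{−1/(n−2)} and u(ξ) = −2C/(C₂(n−2)(C₂ξ + C₃)). Then φ > 0, u > 0 on I, and φ and u satisfy on I the ODE system (E1) (n−2)φ''/φ − (1/u)(u'' + 2(φ'/φ)u') = 0 and (E2) φ''/φ − (n−1)(φ')²/φ² + (φ'/φ)(u'/u) = 0 (i.e. the system with m = 1 and λ = 0). -/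

import Mathlib

set_option maxHeartbeats 1000000 in
/-- the explicit example with `m = 1`, `λ = 0`:
`φ(ξ) = ((n-2)²(C₂ξ+C₃)²/4)^{-1/(n-2)}` and
`u(ξ) = -2C/(C₂(n-2)(C₂ξ+C₃))` satisfy the ODE system on the half-space
`C₂(C₂ξ+C₃) < 0`. -/
theorem stmt13 (n : ℕ) (hn : 3 ≤ n) (C C₂ C₃ : ℝ) (hC : 0 < C) (hC₂ : C₂ ≠ 0)
    (I : Set ℝ) (hIdef : I = {ξ : ℝ | C₂ * (C₂ * ξ + C₃) < 0})
    (φ u : ℝ → ℝ)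
    (hφ : φ = fun ξ =>
      (((n : ℝ) - 2) ^ 2 * (C₂ * ξ + C₃) ^ 2 / 4) ^ (-(1 / ((n : ℝ) - 2))))
    (hu : u = fun ξ => -2 * C / (C₂ * ((n : ℝ) - 2) * (C₂ * ξ + C₃))) :
    (∀ ξ ∈ I, 0 < φ ξ) ∧ (∀ ξ ∈ I, 0 < u ξ) ∧
    (∀ ξ ∈ I, ((n : ℝ) - 2) * deriv (deriv φ) ξ / φ ξ
      - (1 / u ξ) * (deriv (deriv u) ξ + 2 * (deriv φ ξ / φ ξ) * deriv u ξ) = 0) ∧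
    (∀ ξ ∈ I, deriv (deriv φ) ξ / φ ξ
      - ((n : ℝ) - 1) * (deriv φ ξ) ^ 2 / (φ ξ) ^ 2
      + (deriv φ ξ / φ ξ) * (deriv u ξ / u ξ) = 0) := by
  have hn3 : (3:ℝ) ≤ (n:ℝ) := by exact_mod_cast hn
  have hApos : 0 < (n:ℝ) - 2 := by linarith
  have hAne : (n:ℝ) - 2 ≠ 0 := hApos.ne'
  -- the candidate derivative functions
  set Fφ : ℝ → ℝ := fun ξ => -(2*C₂/((n:ℝ)-2)) *
      ((((n:ℝ)-2)^2*(C₂*ξ+C₃)^2/4) ^ (-(1 / ((n : ℝ) - 2)))) / (C₂*ξ+C₃) with hFφ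
  set Gφ : ℝ → ℝ := fun ξ => C₂^2*(4+2*((n:ℝ)-2))/((n:ℝ)-2)^2 *
      ((((n:ℝ)-2)^2*(C₂*ξ+C₃)^2/4) ^ (-(1 / ((n : ℝ) - 2)))) / (C₂*ξ+C₃)^2 with hGφ
  set Fu : ℝ → ℝ := fun ξ => 2*C/(((n:ℝ)-2)*(C₂*ξ+C₃)^2) with hFu
  set Gu : ℝ → ℝ := fun ξ => -4*C*C₂/(((n:ℝ)-2)*(C₂*ξ+C₃)^3) with hGu
  have ht' : ∀ ξ : ℝ, HasDerivAt (fun ξ : ℝ => C₂*ξ+C₃) C₂ ξ := fun ξ => by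
    simpa using ((hasDerivAt_id ξ).const_mul C₂).add_const C₃
  have hgpos : ∀ ξ : ℝ, C₂*ξ+C₃ ≠ 0 → 0 < ((n:ℝ)-2)^2*(C₂*ξ+C₃)^2/4 := by
    intro ξ ht
    have h1 : 0 < (C₂*ξ+C₃)^2 := (sq_nonneg _).lt_of_ne (Ne.symm (pow_ne_zero 2 ht))
    have h2 : 0 < ((n:ℝ)-2)^2 := pow_pos hApos 2
    positivity
  have hg : ∀ ξ : ℝ, HasDerivAt (fun ξ : ℝ => ((n:ℝ)-2)^2*(C₂*ξ+C₃)^2/4)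
      (((n:ℝ)-2)^2*(2*(C₂*ξ+C₃)*C₂)/4) ξ := by
    intro ξ
    have := (((ht' ξ).pow 2).const_mul (((n:ℝ)-2)^2)).div_const 4
    refine this.congr_deriv ?_
    ring
  -- first derivative of φ
  have hdφ : ∀ ξ : ℝ, C₂*ξ+C₃ ≠ 0 → HasDerivAt φ (Fφ ξ) ξ := by
    intro ξ ht
    have hgp := hgpos ξ ht
    have h := (hg ξ).rpow_const (p := -(1 / ((n : ℝ) - 2))) (Or.inl hgp.ne')
    rw [hφ]
    convert h using 1
    rw [hFφ]
    simp only
    rw [Real.rpow_sub hgp, Real.rpow_one]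
    field_simp
  -- second derivative of φ (derivative of Fφ)
  have hdFφ : ∀ ξ : ℝ, C₂*ξ+C₃ ≠ 0 → HasDerivAt Fφ (Gφ ξ) ξ := by
    intro ξ ht
    have hgp := hgpos ξ ht
    have hr := (hg ξ).rpow_const (p := -(1 / ((n : ℝ) - 2))) (Or.inl hgp.ne')
    have h := ((hr.div (ht' ξ) ht).const_mul (-(2*C₂/((n:ℝ)-2))))
    have heq : Fφ = fun ξ => -(2*C₂/((n:ℝ)-2)) *
        (((((n:ℝ)-2)^2*(C₂*ξ+C₃)^2/4) ^ (-(1 / ((n : ℝ) - 2)))) / (C₂*ξ+C₃)) := by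
      funext x; rw [hFφ]; ring
    rw [heq]
    refine h.congr_deriv ?_
    rw [hGφ]
    simp only
    rw [Real.rpow_sub hgp, Real.rpow_one]
    field_simp
    ring
  -- first derivative of u
  have hdu : ∀ ξ : ℝ, C₂*ξ+C₃ ≠ 0 → HasDerivAt u (Fu ξ) ξ := by
    intro ξ ht
    have hden : HasDerivAt (fun ξ : ℝ => C₂*((n:ℝ)-2)*(C₂*ξ+C₃)) (C₂*((n:ℝ)-2)*C₂) ξ :=
      (ht' ξ).const_mul (C₂*((n:ℝ)-2))
    have hne : C₂*((n:ℝ)-2)*(C₂*ξ+C₃) ≠ 0 := mul_ne_zero (mul_ne_zero hC₂ hAne) ht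
    have h := (hasDerivAt_const ξ (-2*C)).div hden hne
    rw [hu]
    refine h.congr_deriv ?_
    rw [hFu]
    field_simp
    ring
  -- second derivative of u
  have hdFu : ∀ ξ : ℝ, C₂*ξ+C₃ ≠ 0 → HasDerivAt Fu (Gu ξ) ξ := by
    intro ξ ht
    have hden : HasDerivAt (fun ξ : ℝ => ((n:ℝ)-2)*(C₂*ξ+C₃)^2)
        (((n:ℝ)-2)*(2*(C₂*ξ+C₃)*C₂)) ξ := by
      have := ((ht' ξ).pow 2).const_mul ((n:ℝ)-2)
      refine this.congr_deriv ?_; ring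
    have hne : ((n:ℝ)-2)*(C₂*ξ+C₃)^2 ≠ 0 := mul_ne_zero hAne (pow_ne_zero 2 ht)
    have h := (hasDerivAt_const ξ (2*C)).div hden hne
    rw [hFu]
    refine h.congr_deriv ?_
    rw [hGu]
    field_simp
    ring
  have hSopen : IsOpen {ξ : ℝ | C₂*ξ+C₃ ≠ 0} := by
    have hcont : Continuous fun ξ : ℝ => C₂*ξ+C₃ := by continuity
    exact isOpen_ne.preimage hcont
  have hmem : ∀ ξ ∈ I, C₂*ξ+C₃ ≠ 0 := by
    intro ξ hξ h0
    rw [hIdef] at hξ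
    simp only [Set.mem_setOf_eq, h0, mul_zero] at hξ
    exact lt_irrefl 0 hξ
  have hφpos : ∀ ξ ∈ I, 0 < φ ξ := by
    intro ξ hξ
    rw [hφ]
    exact Real.rpow_pos_of_pos (hgpos ξ (hmem ξ hξ)) _
  have hupos : ∀ ξ ∈ I, 0 < u ξ := by
    intro ξ hξ
    rw [hIdef] at hξ
    simp only [Set.mem_setOf_eq] at hξ
    rw [hu]
    simp only
    have hden : C₂ * ((n:ℝ)-2) * (C₂*ξ+C₃) < 0 := by
      have h1 : ((n:ℝ)-2) * (C₂*(C₂*ξ+C₃)) < 0 := mul_neg_of_pos_of_neg hApos hξ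
      nlinarith
    have hnum : -2*C < 0 := by linarith
    exact div_pos_of_neg_of_neg hnum hden
  have hderivφ : ∀ ξ ∈ I, deriv φ ξ = Fφ ξ := fun ξ hξ => (hdφ ξ (hmem ξ hξ)).deriv
  have hderivu : ∀ ξ ∈ I, deriv u ξ = Fu ξ := fun ξ hξ => (hdu ξ (hmem ξ hξ)).deriv
  have hderiv2φ : ∀ ξ ∈ I, deriv (deriv φ) ξ = Gφ ξ := by
    intro ξ hξ
    have hev : deriv φ =ᶠ[nhds ξ] Fφ := by
      filter_upwards [hSopen.mem_nhds (hmem ξ hξ)] with y hy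
      exact (hdφ y hy).deriv
    rw [hev.deriv_eq]
    exact (hdFφ ξ (hmem ξ hξ)).deriv
  have hderiv2u : ∀ ξ ∈ I, deriv (deriv u) ξ = Gu ξ := by
    intro ξ hξ
    have hev : deriv u =ᶠ[nhds ξ] Fu := by
      filter_upwards [hSopen.mem_nhds (hmem ξ hξ)] with y hy
      exact (hdu y hy).deriv
    rw [hev.deriv_eq]
    exact (hdFu ξ (hmem ξ hξ)).deriv
  refine ⟨hφpos, hupos, ?_, ?_⟩
  · -- E1
    intro ξ hξ
    have ht := hmem ξ hξ
    have hXne : ((((n:ℝ)-2)^2*(C₂*ξ+C₃)^2/4) ^ (-(1 / ((n : ℝ) - 2)))) ≠ 0 :=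
      (Real.rpow_pos_of_pos (hgpos ξ ht) _).ne'
    rw [hderiv2φ ξ hξ, hderiv2u ξ hξ, hderivφ ξ hξ, hderivu ξ hξ, hφ, hu,
      hFφ, hGφ, hFu, hGu]
    simp only
    set t := C₂*ξ+C₃ with htd
    set X := (((n:ℝ)-2)^2*t^2/4) ^ (-(1 / ((n : ℝ) - 2))) with hXd
    field_simp [ht, hAne, hC₂, hXne, hC.ne']
    ring
  · -- E2
    intro ξ hξ
    have ht := hmem ξ hξ
    have hXne : ((((n:ℝ)-2)^2*(C₂*ξ+C₃)^2/4) ^ (-(1 / ((n : ℝ) - 2)))) ≠ 0 :=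
      (Real.rpow_pos_of_pos (hgpos ξ ht) _).ne'
    rw [hderiv2φ ξ hξ, hderivφ ξ hξ, hderivu ξ hξ, hφ, hu, hFφ, hGφ, hFu]
    simp only
    set t := C₂*ξ+C₃ with htd
    set X := (((n:ℝ)-2)^2*t^2/4) ^ (-(1 / ((n : ℝ) - 2))) with hXd
    field_simp [ht, hAne, hC₂, hXne, hC.ne']
    ring
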